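/- Let k be a field, Σ a simplicial complex on the vertex set {v_1,…,v_t}, and σ=[v_1,…,v_l] a face of Σ. Let X_σ denote the image in k[Σ] (respectively in k[st̄ σ]) of the monomial X_1⋯X_l. Then the localizations of the two Stanley–Reisner rings at the multiplicative set of powers of X_σ are isomorphic: k[Σ]_{(X_σ)} ≅ k[st̄ σ]_{(X_σ)}; the isomorphism is induced by the inclusion of polynomial rings k[X_1,…,X_r] ↪ k[X_1,…,X_t], where v_1,…,v_r are the vertices of st̄ σ. -/

import Mathlib

set_option synthInstance.maxHeartbeats 1000000
set_option maxHeartbeats 2000000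

open Finset

/-- An abstract simplicial complex on the vertex set `{v_1, …, v_n}` (modelled as `Fin n`). -/
structure AbstractSimplicialComplexFin (n : ℕ) where
  faces : Finset (Finset (Fin n))
  down_closed : ∀ σ ∈ faces, ∀ τ, τ ⊆ σ → τ ∈ faces
  singleton_mem : ∀ i : Fin n, {i} ∈ faces
  empty_mem : (∅ : Finset (Fin n)) ∈ faces

/-- The Stanley–Reisner ideal of a family `P` of faces with vertices in `V`:
the ideal generated by the squarefree monomials corresponding to non-faces. -/
noncomputable def srIdeal (k : Type) [CommRing k] {V : Type} (P : Set (Finset V)) :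
    Ideal (MvPolynomial V k) :=
  Ideal.span ((fun s : Finset V => ∏ i ∈ s, MvPolynomial.X i) '' {s | s ∉ P})

/-- The Stanley–Reisner (face) ring of a family of faces. -/
abbrev srRing (k : Type) [CommRing k] {V : Type} (P : Set (Finset V)) : Type :=
  MvPolynomial V k ⧸ srIdeal k P

/-- The image in the Stanley–Reisner ring of the squarefree monomial supported on `σ`. -/
noncomputable def srMonomial (k : Type) [CommRing k] {V : Type} (P : Set (Finset V))
    (σ : Finset V) : srRing k P :=
  Ideal.Quotient.mk (srIdeal k P) (∏ i ∈ σ, MvPolynomial.X i)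

/-- The natural map from the polynomial ring to the localization of the Stanley–Reisner
ring at the powers of the monomial `X_σ`. -/
noncomputable def toLocalizedSR (k : Type) [CommRing k] {V : Type} (P : Set (Finset V))
    (σ : Finset V) :
    MvPolynomial V k →+* Localization.Away (srMonomial k P σ) :=
  (algebraMap (srRing k P) (Localization.Away (srMonomial k P σ))).comp
    (Ideal.Quotient.mk (srIdeal k P))

open MvPolynomial

/-- The truncation hom killing variables with index `≥ r`. -/
noncomputable def truncHom (k : Type) [CommRing k] {t r : ℕ} (hr : r ≤ t) :
    MvPolynomial (Fin t) k →+* MvPolynomial (Fin r) k :=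
  eval₂Hom C (fun i => if h : (i : ℕ) < r then X (⟨(i : ℕ), h⟩ : Fin r) else 0)

lemma truncHom_C (k : Type) [CommRing k] {t r : ℕ} (hr : r ≤ t) (c : k) :
    truncHom k hr (C c) = C c := by
  simp [truncHom]

lemma truncHom_X_lt' (k : Type) [CommRing k] {t r : ℕ} (hr : r ≤ t) (i : Fin t)
    (h : (i : ℕ) < r) : truncHom k hr (X i) = X ⟨(i : ℕ), h⟩ := by
  simp [truncHom, dif_pos h]

lemma truncHom_X_lt (k : Type) [CommRing k] {t r : ℕ} (hr : r ≤ t) (j : Fin r) :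
    truncHom k hr (X (Fin.castLE hr j)) = X j := by
  rw [truncHom_X_lt' k hr _ (by simpa using j.isLt)]
  congr 1

lemma truncHom_X_ge (k : Type) [CommRing k] {t r : ℕ} (hr : r ≤ t) (i : Fin t)
    (h : ¬ (i : ℕ) < r) : truncHom k hr (X i) = 0 := by
  simp [truncHom, dif_neg h]

lemma truncHom_rename (k : Type) [CommRing k] {t r : ℕ} (hr : r ≤ t)
    (p : MvPolynomial (Fin r) k) :
    truncHom k hr (rename (Fin.castLE hr) p) = p := by
  have : (truncHom k hr).comp (rename (Fin.castLE hr)).toRingHom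
      = RingHom.id (MvPolynomial (Fin r) k) := by
    apply MvPolynomial.ringHom_ext
    · intro c; simp [truncHom_C]
    · intro j; simp [truncHom_X_lt]
  exact RingHom.congr_fun this p

lemma truncHom_prod (k : Type) [CommRing k] {t r : ℕ} (hr : r ≤ t)
    (s' : Finset (Fin r)) :
    truncHom k hr (∏ i ∈ s'.map (Fin.castLEEmb hr), X i) = ∏ j ∈ s', X j := by
  rw [Finset.prod_map, map_prod]
  exact Finset.prod_congr rfl fun j _ => by
    simpa using truncHom_X_lt k hr j

lemma rename_prod_X (k : Type) [CommRing k] {t r : ℕ} (hr : r ≤ t)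
    (s' : Finset (Fin r)) :
    rename (Fin.castLE hr) (∏ j ∈ s', (X j : MvPolynomial (Fin r) k))
      = ∏ i ∈ s'.map (Fin.castLEEmb hr), X i := by
  rw [Finset.prod_map, map_prod]
  exact Finset.prod_congr rfl fun j _ => by simp

lemma exists_map_eq {t r : ℕ} (hr : r ≤ t) (s : Finset (Fin t))
    (h : ∀ i ∈ s, (i : ℕ) < r) :
    ∃ s' : Finset (Fin r), s'.map (Fin.castLEEmb hr) = s := by
  classical
  refine ⟨s.preimage (Fin.castLE hr) ((Fin.castLE_injective hr).injOn), ?_⟩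
  ext a
  simp only [Finset.mem_map, Finset.mem_preimage, Fin.castLEEmb_apply]
  constructor
  · rintro ⟨j, hj, rfl⟩; exact hj
  · intro ha; exact ⟨⟨(a : ℕ), h a ha⟩, by simpa [Fin.ext_iff] using ha, Fin.ext rfl⟩

lemma srMonomial_eq_zero (k : Type) [CommRing k] {V : Type} (P : Set (Finset V))
    (s : Finset V) (h : s ∉ P) : srMonomial k P s = 0 :=
  Ideal.Quotient.eq_zero_iff_mem.mpr (Ideal.subset_span ⟨s, h, rfl⟩)

lemma srLoc_union_zero (k : Type) [CommRing k] {V : Type} [DecidableEq V]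
    (P : Set (Finset V)) (σ s : Finset V) (h : σ ∪ s ∉ P) :
    algebraMap (srRing k P) (Localization.Away (srMonomial k P σ))
      (srMonomial k P s) = 0 := by
  have h0 : srMonomial k P (σ ∪ s) = 0 := srMonomial_eq_zero k P _ h
  have hmul : srMonomial k P σ * srMonomial k P s = 0 := by
    unfold srMonomial at *
    rw [← map_mul, ← Finset.prod_union_inter, map_mul, h0, zero_mul]
  have h2 : algebraMap (srRing k P) (Localization.Away (srMonomial k P σ))
      (srMonomial k P σ) * algebraMap _ _ (srMonomial k P s) = 0 := by
    rw [← map_mul, hmul, map_zero]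
  exact ((IsLocalization.Away.algebraMap_isUnit
    (S := Localization.Away (srMonomial k P σ)) (srMonomial k P σ)).mul_right_eq_zero).mp h2

section SRMaps

open MvPolynomial

variable (k : Type) [CommRing k] {t r : ℕ} (hr : r ≤ t)
  (P : Set (Finset (Fin t))) (Q : Set (Finset (Fin r)))
  (σ : Finset (Fin t)) (σ' : Finset (Fin r))

noncomputable def SRF
    (hk : ∀ a ∈ srIdeal k P, ((toLocalizedSR k Q σ').comp (truncHom k hr)) a = 0)
    (hu : IsUnit (Ideal.Quotient.lift (srIdeal k P)
      ((toLocalizedSR k Q σ').comp (truncHom k hr)) hk (srMonomial k P σ))) :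
    Localization.Away (srMonomial k P σ) →+* Localization.Away (srMonomial k Q σ') :=
  Localization.awayLift (Ideal.Quotient.lift (srIdeal k P)
    ((toLocalizedSR k Q σ').comp (truncHom k hr)) hk) _ hu

lemma SRF_mk
    (hk : ∀ a ∈ srIdeal k P, ((toLocalizedSR k Q σ').comp (truncHom k hr)) a = 0)
    (hu : IsUnit (Ideal.Quotient.lift (srIdeal k P)
      ((toLocalizedSR k Q σ').comp (truncHom k hr)) hk (srMonomial k P σ)))
    (q : MvPolynomial (Fin t) k) :
    SRF k hr P Q σ σ' hk hu
      (algebraMap (srRing k P) (Localization.Away (srMonomial k P σ))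
        (Ideal.Quotient.mk (srIdeal k P) q))
      = algebraMap (srRing k Q) (Localization.Away (srMonomial k Q σ'))
          (Ideal.Quotient.mk (srIdeal k Q) (truncHom k hr q)) := by
  unfold SRF
  rw [IsLocalization.Away.lift_eq, Ideal.Quotient.lift_mk]
  rfl

noncomputable def SRG
    (hk : ∀ a ∈ srIdeal k Q,
      ((toLocalizedSR k P σ).comp (rename (Fin.castLE hr)).toRingHom) a = 0)
    (hu : IsUnit (Ideal.Quotient.lift (srIdeal k Q)
      ((toLocalizedSR k P σ).comp (rename (Fin.castLE hr)).toRingHom) hk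
      (srMonomial k Q σ'))) :
    Localization.Away (srMonomial k Q σ') →+* Localization.Away (srMonomial k P σ) :=
  Localization.awayLift (Ideal.Quotient.lift (srIdeal k Q)
    ((toLocalizedSR k P σ).comp (rename (Fin.castLE hr)).toRingHom) hk) _ hu

lemma SRG_mk
    (hk : ∀ a ∈ srIdeal k Q,
      ((toLocalizedSR k P σ).comp (rename (Fin.castLE hr)).toRingHom) a = 0)
    (hu : IsUnit (Ideal.Quotient.lift (srIdeal k Q)
      ((toLocalizedSR k P σ).comp (rename (Fin.castLE hr)).toRingHom) hk
      (srMonomial k Q σ')))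
    (q : MvPolynomial (Fin r) k) :
    SRG k hr P Q σ σ' hk hu
      (algebraMap (srRing k Q) (Localization.Away (srMonomial k Q σ'))
        (Ideal.Quotient.mk (srIdeal k Q) q))
      = algebraMap (srRing k P) (Localization.Away (srMonomial k P σ))
          (Ideal.Quotient.mk (srIdeal k P) (rename (Fin.castLE hr) q)) := by
  unfold SRG
  rw [IsLocalization.Away.lift_eq, Ideal.Quotient.lift_mk]
  rfl

end SRMaps

/-- Let `k` be a field, `Σ` a simplicial complex on the vertex set `{v_1,…,v_t}`, and
`σ = [v_1,…,v_l]` a face of `Σ`.  Let `{v_1,…,v_r}` be the vertices of the closed star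
`st̄ σ = {τ ∈ Σ : σ ∪ τ ∈ Σ}`, and let `X_σ` denote the image of the monomial `X_1⋯X_l`
in `k[Σ]` (resp. in `k[st̄ σ]`).  Then the localizations of the two Stanley–Reisner rings
at the powers of `X_σ` are isomorphic, via an isomorphism induced by the inclusion of
polynomial rings `k[X_1,…,X_r] ↪ k[X_1,…,X_t]`. -/
theorem srRing_localization_closedStar (k : Type) [Field k] (t l r : ℕ)
    (hl : l ≤ t) (hr : r ≤ t) (hlr : l ≤ r)
    (S : AbstractSimplicialComplexFin t)
    -- the face σ = [v_1, …, v_l]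
    (σ : Finset (Fin t)) (hσdef : σ = univ.filter (fun i : Fin t => (i : ℕ) < l))
    (hσ : σ ∈ S.faces)
    -- the closed star of σ in Σ
    (closedStar : Finset (Finset (Fin t)))
    (hstar : closedStar = S.faces.filter (fun τ => σ ∪ τ ∈ S.faces))
    -- v_1, …, v_r are exactly the vertices of the closed star
    (hverts : ∀ i : Fin t, (∃ τ ∈ closedStar, i ∈ τ) ↔ (i : ℕ) < r)
    -- the faces of the closed star, viewed as a complex on the vertices v_1, …, v_r
    (starFaces : Set (Finset (Fin r)))
    (hstarFaces : starFaces = {s | s.map (Fin.castLEEmb hr) ∈ closedStar}) :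
    ∃ e : Localization.Away (srMonomial k (↑S.faces : Set (Finset (Fin t))) σ) ≃+*
          Localization.Away
            (srMonomial k starFaces (univ.filter (fun i : Fin r => (i : ℕ) < l))),
      ∀ p : MvPolynomial (Fin r) k,
        e (toLocalizedSR k (↑S.faces : Set (Finset (Fin t))) σ
            (MvPolynomial.rename (Fin.castLE hr) p)) =
          toLocalizedSR k starFaces (univ.filter (fun i : Fin r => (i : ℕ) < l)) p := by
  classical
  set P : Set (Finset (Fin t)) := (↑S.faces : Set (Finset (Fin t))) with hP
  set σ' : Finset (Fin r) := univ.filter (fun i : Fin r => (i : ℕ) < l) with hσ'def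
  -- combinatorial facts
  have h4 : ∀ s : Finset (Fin t), σ ∪ s ∈ P → s ∈ P := fun s h =>
    S.down_closed _ h s Finset.subset_union_right
  have h2 : ∀ s' : Finset (Fin r), s' ∈ starFaces ↔ σ ∪ s'.map (Fin.castLEEmb hr) ∈ P := by
    intro s'
    rw [hstarFaces, Set.mem_setOf_eq, hstar, Finset.mem_filter]
    constructor
    · exact fun h => h.2
    · exact fun h => ⟨S.down_closed _ h _ Finset.subset_union_right, h⟩
  have h3 : ∀ i : Fin t, ¬ (i : ℕ) < r → σ ∪ {i} ∉ P := by
    intro i hi hmem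
    refine hi ((hverts i).mp ⟨{i}, ?_, Finset.mem_singleton_self i⟩)
    rw [hstar, Finset.mem_filter]
    exact ⟨S.singleton_mem i, hmem⟩
  have h1 : σ'.map (Fin.castLEEmb hr) = σ := by
    rw [hσ'def, hσdef]
    ext a
    simp only [Finset.mem_map, Finset.mem_filter, Finset.mem_univ, true_and,
      Fin.castLEEmb_apply]
    constructor
    · rintro ⟨j, hj, rfl⟩; simpa using hj
    · intro ha; exact ⟨⟨(a : ℕ), lt_of_lt_of_le ha hlr⟩, by simpa using ha, Fin.ext rfl⟩
  -- the forward map kills the ideal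
  have hk1 : ∀ a ∈ srIdeal k P, ((toLocalizedSR k starFaces σ').comp (truncHom k hr)) a = 0 := by
    have hle : srIdeal k P ≤
        RingHom.ker ((toLocalizedSR k starFaces σ').comp (truncHom k hr)) := by
      rw [srIdeal, Ideal.span_le]
      rintro x ⟨s, hs, rfl⟩
      simp only [Set.mem_setOf_eq] at hs
      simp only [SetLike.mem_coe, RingHom.mem_ker, RingHom.comp_apply]
      by_cases hall : ∀ i ∈ s, (i : ℕ) < r
      · obtain ⟨s', rfl⟩ := exists_map_eq hr s hall
        rw [truncHom_prod]
        have hs' : s' ∉ starFaces := fun hmem => hs (h4 _ ((h2 s').mp hmem))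
        show (algebraMap (srRing k starFaces) _).comp (Ideal.Quotient.mk _) _ = 0
        rw [RingHom.comp_apply,
          show Ideal.Quotient.mk (srIdeal k starFaces) (∏ j ∈ s', X j)
            = srMonomial k starFaces s' from rfl,
          srMonomial_eq_zero k starFaces s' hs', map_zero]
      · push_neg at hall
        obtain ⟨i, hi, hir⟩ := hall
        rw [map_prod, Finset.prod_eq_zero hi (truncHom_X_ge k hr i (not_lt.mpr hir)), map_zero]
    exact fun a ha => hle ha
  have hu1 : IsUnit (Ideal.Quotient.lift (srIdeal k P)
      ((toLocalizedSR k starFaces σ').comp (truncHom k hr)) hk1 (srMonomial k P σ)) := by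
    have heq : Ideal.Quotient.lift (srIdeal k P)
        ((toLocalizedSR k starFaces σ').comp (truncHom k hr)) hk1 (srMonomial k P σ)
        = algebraMap (srRing k starFaces) (Localization.Away (srMonomial k starFaces σ'))
            (srMonomial k starFaces σ') := by
      rw [show srMonomial k P σ = Ideal.Quotient.mk (srIdeal k P) (∏ i ∈ σ, X i) from rfl]
      rw [Ideal.Quotient.lift_mk, RingHom.comp_apply, ← h1, truncHom_prod]
      rfl
    rw [heq]
    exact IsLocalization.Away.algebraMap_isUnit
      (S := Localization.Away (srMonomial k starFaces σ')) _
  -- the backward map kills the ideal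
  have hk2 : ∀ a ∈ srIdeal k starFaces,
      ((toLocalizedSR k P σ).comp (rename (Fin.castLE hr)).toRingHom) a = 0 := by
    have hle : srIdeal k starFaces ≤
        RingHom.ker ((toLocalizedSR k P σ).comp (rename (Fin.castLE hr)).toRingHom) := by
      rw [srIdeal, Ideal.span_le]
      rintro x ⟨s', hs', rfl⟩
      simp only [Set.mem_setOf_eq] at hs'
      simp only [SetLike.mem_coe, RingHom.mem_ker, RingHom.comp_apply,
        AlgHom.toRingHom_eq_coe, RingHom.coe_coe]
      rw [rename_prod_X]
      have hun : σ ∪ s'.map (Fin.castLEEmb hr) ∉ P := fun hmem => hs' ((h2 s').mpr hmem)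
      show (algebraMap (srRing k P) _).comp (Ideal.Quotient.mk _) _ = 0
      rw [RingHom.comp_apply,
        show Ideal.Quotient.mk (srIdeal k P) (∏ i ∈ s'.map (Fin.castLEEmb hr), X i)
          = srMonomial k P (s'.map (Fin.castLEEmb hr)) from rfl]
      exact srLoc_union_zero k P σ _ hun
    exact fun a ha => hle ha
  have hu2 : IsUnit (Ideal.Quotient.lift (srIdeal k starFaces)
      ((toLocalizedSR k P σ).comp (rename (Fin.castLE hr)).toRingHom) hk2
      (srMonomial k starFaces σ')) := by
    have heq : Ideal.Quotient.lift (srIdeal k starFaces)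
        ((toLocalizedSR k P σ).comp (rename (Fin.castLE hr)).toRingHom) hk2
        (srMonomial k starFaces σ')
        = algebraMap (srRing k P) (Localization.Away (srMonomial k P σ))
            (srMonomial k P σ) := by
      rw [show srMonomial k starFaces σ' = Ideal.Quotient.mk (srIdeal k starFaces) (∏ j ∈ σ', X j) from rfl]
      rw [Ideal.Quotient.lift_mk, RingHom.comp_apply]
      rw [show ((rename (Fin.castLE hr)).toRingHom : MvPolynomial (Fin r) k →+* _)
          (∏ j ∈ σ', X j) = rename (Fin.castLE hr) (∏ j ∈ σ', X j) from rfl,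
        rename_prod_X, h1]
      rfl
    rw [heq]
    exact IsLocalization.Away.algebraMap_isUnit
      (S := Localization.Away (srMonomial k P σ)) _
  -- the equivalence
  refine ⟨RingEquiv.ofRingHom (SRF k hr P starFaces σ σ' hk1 hu1)
    (SRG k hr P starFaces σ σ' hk2 hu2) ?_ ?_, ?_⟩
  swap
  · -- G ∘ F = id
    refine IsLocalization.ringHom_ext (R := srRing k P)
      (S := Localization.Away (srMonomial k P σ))
      (P := Localization.Away (srMonomial k P σ))
      (Submonoid.powers (srMonomial k P σ)) ?_
    apply Ideal.Quotient.ringHom_ext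
    apply MvPolynomial.ringHom_ext
    · intro c
      simp only [RingHom.comp_apply, RingHom.coe_coe, RingHom.id_apply]
      rw [SRF_mk, truncHom_C, SRG_mk, rename_C]
    · intro i
      simp only [RingHom.comp_apply, RingHom.coe_coe, RingHom.id_apply]
      rw [SRF_mk]
      by_cases hi : (i : ℕ) < r
      · rw [truncHom_X_lt' k hr i hi, SRG_mk, rename_X]
        have : Fin.castLE hr ⟨(i : ℕ), hi⟩ = i := Fin.ext rfl
        rw [this]
      · rw [truncHom_X_ge k hr i hi, map_zero, map_zero, map_zero]
        have h0 : algebraMap (srRing k P) (Localization.Away (srMonomial k P σ))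
            (Ideal.Quotient.mk (srIdeal k P) (X i)) = 0 := by
          simpa [srMonomial] using srLoc_union_zero k P σ {i} (h3 i hi)
        rw [h0]
  · -- F ∘ G = id
    refine IsLocalization.ringHom_ext (R := srRing k starFaces)
      (S := Localization.Away (srMonomial k starFaces σ'))
      (P := Localization.Away (srMonomial k starFaces σ'))
      (Submonoid.powers (srMonomial k starFaces σ')) ?_
    apply Ideal.Quotient.ringHom_ext
    apply MvPolynomial.ringHom_ext
    · intro c
      simp only [RingHom.comp_apply, RingHom.coe_coe, RingHom.id_apply]
      rw [SRG_mk, rename_C, SRF_mk, truncHom_C]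
    · intro j
      simp only [RingHom.comp_apply, RingHom.coe_coe, RingHom.id_apply]
      rw [SRG_mk, rename_X, SRF_mk, truncHom_X_lt]
  · -- compatibility
    intro p
    simp only [toLocalizedSR, RingHom.comp_apply, RingEquiv.ofRingHom_apply]
    rw [SRF_mk, truncHom_rename]
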